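/- Let (K,v) be a henselian valued field and a an element of the algebraic closure of K which is weakly immediate over K. If a is not strongly immediate over K, then there exists b in the algebraic closure of K such that (K(b)|K,v) is an immediate extension, dist(b,K) = dist(a,K), and [K(b):K] < [K(a):K]. -/

import Mathlib

noncomputable section
open scoped Classical

structure AddVal (Ω : Type*) [Field Ω] (Γ : Type*) [AddCommGroup Γ] [LinearOrder Γ] [IsOrderedAddMonoid Γ] where
  v : Ω → WithTop Γ
  v_top_iff : ∀ x, v x = ⊤ ↔ x = 0
  v_one : v 1 = 0
  v_mul : ∀ x y, v (x * y) = v x + v y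
  v_add : ∀ x y, min (v x) (v y) ≤ v (x + y)

namespace AddVal

variable {Ω : Type*} [Field Ω] {Γ : Type*} [AddCommGroup Γ] [LinearOrder Γ] [IsOrderedAddMonoid Γ]
variable (w : AddVal Ω Γ)

def valueGroup (K : Subfield Ω) : AddSubgroup Γ where
  carrier := {γ | ∃ x ∈ K, w.v x = (γ : WithTop Γ)}
  zero_mem' := ⟨1, K.one_mem, by rw [w.v_one]; rfl⟩
  add_mem' := by
    rintro γ δ ⟨x, hx, hxv⟩ ⟨y, hy, hyv⟩
    exact ⟨x * y, mul_mem hx hy, by rw [w.v_mul, hxv, hyv, ← WithTop.coe_add]⟩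
  neg_mem' := by
    rintro γ ⟨x, hx, hxv⟩
    have hx0 : x ≠ 0 := by
      intro h
      rw [h, (w.v_top_iff 0).mpr rfl] at hxv
      exact (WithTop.top_ne_coe) hxv
    refine ⟨x⁻¹, inv_mem hx, ?_⟩
    have h1 : w.v x + w.v x⁻¹ = 0 := by
      rw [← w.v_mul, mul_inv_cancel₀ hx0, w.v_one]
    rw [hxv] at h1
    cases h : w.v x⁻¹ with
    | top => rw [h] at h1; simp at h1
    | coe δ =>
        rw [h, ← WithTop.coe_add, ← WithTop.coe_zero, WithTop.coe_eq_coe] at h1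
        rw [WithTop.coe_eq_coe]
        exact eq_neg_of_add_eq_zero_right h1

def divHull (H : AddSubgroup Γ) : AddSubgroup Γ where
  carrier := {γ | ∃ n : ℕ, 0 < n ∧ n • γ ∈ H}
  zero_mem' := ⟨1, one_pos, by simpa using H.zero_mem⟩
  add_mem' := by
    rintro γ δ ⟨n, hn, hγ⟩ ⟨m, hm, hδ⟩
    refine ⟨n * m, Nat.mul_pos hn hm, ?_⟩
    rw [smul_add]
    refine H.add_mem ?_ ?_
    · rw [mul_comm, mul_smul]; exact AddSubgroup.nsmul_mem H hγ m
    · rw [mul_smul]; exact AddSubgroup.nsmul_mem H hδ n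
  neg_mem' := by
    rintro γ ⟨n, hn, hγ⟩
    exact ⟨n, hn, by rw [smul_neg]; exact H.neg_mem hγ⟩

def weaklyImmediate (K : Subfield Ω) (a : Ω) : Prop :=
  ∀ c ∈ K, ∃ c' ∈ K, w.v (a - c) < w.v (a - c')

def distSet (K : Subfield Ω) (a : Ω) : Set Γ :=
  {γ | γ ∈ divHull (w.valueGroup K) ∧
    ∃ c ∈ K, ∃ δ ∈ divHull (w.valueGroup K), w.v (a - c) = (δ : WithTop Γ) ∧ γ ≤ δ}

/-- The field degree `[L:K]` of an extension of subfields of `Ω` (0 if not an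
extension or infinite). -/
def fdeg (K L : Subfield Ω) : ℕ :=
  if h : K ≤ L then
    letI : Algebra K L := (Subfield.inclusion h).toAlgebra
    Module.finrank K L
  else 0

/-- The ramification index `(vL : vK)`. -/
def ramIdx (K L : Subfield Ω) : ℕ := (w.valueGroup K).relIndex (w.valueGroup L)

/-- The inertia degree `[Lv : Kv]`: the supremum of the cardinalities of families of
integral elements of `L` whose residues are `Kv`-linearly independent; the latter is
expressed by the standard valuation-theoretic criterion
`v (∑ cᵢ xᵢ) = min v cᵢ` for all families of coefficients in `K`. -/
def resDeg (K L : Subfield Ω) : ℕ :=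
  sSup {n : ℕ | ∃ x : Fin n → Ω, (∀ i, x i ∈ L ∧ 0 ≤ w.v (x i)) ∧
    ∀ c : Fin n → Ω, (∀ i, c i ∈ K) →
      w.v (∑ i, c i * x i) = Finset.univ.inf fun i => w.v (c i)}

/-- The defect `d(L|K,v) = [L:K] / ((vL:vK)·[Lv:Kv])`. -/
def defect (K L : Subfield Ω) : ℕ := fdeg K L / (w.ramIdx K L * w.resDeg K L)

/-- `(L|K,v)` is a uv-extension: every `K`-embedding of `L` into `Ω` preserves the
valuation (for `Ω` an algebraically closed valued extension with `L|K` algebraic,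
this says precisely that the extension of `v` from `K` to `L` is unique). -/
def uvExt (K L : Subfield Ω) : Prop :=
  ∃ h : K ≤ L, ∀ σ : ↥L →+* Ω, (∀ x : ↥K, σ (Subfield.inclusion h x) = (x : Ω)) →
    ∀ y : ↥L, w.v (σ y) = w.v (y : Ω)

/-- `(K,v)` is henselian: the extension of `v` to the algebraic closure is unique,
i.e. every `K`-endomorphism of `Ω` preserves the valuation. -/
def henselian (K : Subfield Ω) : Prop :=
  ∀ σ : Ω →+* Ω, (∀ x ∈ K, σ x = x) → ∀ y : Ω, w.v (σ y) = w.v y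

/-- The henselization of `(K,v)` inside `(Ω,v)`: the smallest henselian subfield
containing `K`. -/
def henselization (K : Subfield Ω) : Subfield Ω :=
  sInf {M : Subfield Ω | K ≤ M ∧ w.henselian M}

/-- `(L|K,v)` is an immediate extension: `vK → vL` and `Kv → Lv` are onto. -/
def immediateExt (K L : Subfield Ω) : Prop :=
  K ≤ L ∧ w.valueGroup K = w.valueGroup L ∧
    ∀ x ∈ L, w.v x = 0 → ∃ c ∈ K, 0 < w.v (x - c)

/-- The subfield `K(a)` of `Ω`. -/
def adjoinEl (K : Subfield Ω) (a : Ω) : Subfield Ω := Subfield.closure (insert a (K : Set Ω))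

/-- `m` elements of `L∖K`, weakly immediate over `K`, realize (modulo the subgroup `G`)
all distances of weakly immediate elements of `L∖K`. -/
def nddWorks (K L : Subfield Ω) (G : AddSubgroup Γ) (m : ℕ) : Prop :=
  ∃ a : Fin m → Ω, (∀ i, a i ∈ L ∧ a i ∉ K ∧ w.weaklyImmediate K (a i)) ∧
    ∀ b ∈ L, b ∉ K → w.weaklyImmediate K b →
      ∃ i, ∃ α ∈ G, w.distSet K b = (fun γ => α + γ) '' w.distSet K (a i)

/-- `ndd(L|K,v)`: the number of distances in `(L|K,v)` distinct modulo `vK`. -/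
def ndd (K L : Subfield Ω) : ℕ := sInf {m | w.nddWorks K L (w.valueGroup K) m}

/-- `ndd*(L|K,v)`: the number of distances in `(L|K,v)` distinct modulo the divisible
hull of `vK`. -/
def nddStar (K L : Subfield Ω) : ℕ := sInf {m | w.nddWorks K L (divHull (w.valueGroup K)) m}

/-- `a` is strongly immediate over `K`: `v(a-K)` has no maximal element and for every
polynomial `g` over `K` of degree `< [K(a):K]`, the value `v g(c)` is eventually fixed. -/
def stronglyImmediate (K : Subfield Ω) (a : Ω) : Prop :=
  w.weaklyImmediate K a ∧
    ∀ g : Polynomial Ω, (∀ n, g.coeff n ∈ K) → g.natDegree < fdeg K (adjoinEl K a) →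
      ∃ c₀ ∈ K, ∀ c ∈ K, ∀ c' ∈ K, w.v (a - c₀) ≤ w.v (a - c) → w.v (a - c₀) ≤ w.v (a - c') →
        w.v (g.eval c) = w.v (g.eval c')

/-- The characteristic exponent of the residue field `Kv`: the prime `q` with
`v q > 0` (i.e. `char Kv = q`) if it exists, and `1` otherwise. -/
def resCharExp : ℕ :=
  if h : ∃ q : ℕ, q.Prime ∧ 0 < w.v (q : Ω) then h.choose else 1

/-- `L|K` is a normal extension (for `Ω` algebraically closed and algebraic over `K`):
every `K`-endomorphism of `Ω` maps `L` into `L`. -/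
def normalExt (K L : Subfield Ω) : Prop :=
  K ≤ L ∧ ∀ σ : Ω →+* Ω, (∀ x ∈ K, σ x = x) → ∀ y ∈ L, σ y ∈ L

/-- The number `g` of distinct extensions of `v` from `K` to `L` (inside `(Ω,v)` with
`Ω` algebraically closed and algebraic over `K`, these are exactly the restrictions
to `L` of the conjugates of `v`). -/
def numExt (K L : Subfield Ω) : ℕ :=
  Nat.card {w' : ↥L → WithTop Γ //
    ∃ σ : Ω →+* Ω, (∀ x ∈ K, σ x = x) ∧ ∀ y : ↥L, w' y = w.v (σ y)}

/-- `H` is a convex subgroup of `G`. -/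
def convexIn (G H : AddSubgroup Γ) : Prop :=
  H ≤ G ∧ ∀ a ∈ H, ∀ b ∈ G, ∀ c ∈ H, a ≤ b → b ≤ c → b ∈ H

/-- `(K,v)` has rank `r`: there are exactly `r` proper convex subgroups of `vK`. -/
def hasRank (K : Subfield Ω) (r : ℕ) : Prop :=
  {H : AddSubgroup Γ | convexIn (w.valueGroup K) H ∧ H ≠ w.valueGroup K}.Finite ∧
    Nat.card {H : AddSubgroup Γ | convexIn (w.valueGroup K) H ∧ H ≠ w.valueGroup K} = r

end AddVal

/-- The subfield `K^{1/p} = {x | xᵖ ∈ K}` of `Ω` (for `Ω` of characteristic `p`). -/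
def pRoots (Ω : Type*) [Field Ω] (p : ℕ) [hp : Fact p.Prime] [CharP Ω p] (K : Subfield Ω) :
    Subfield Ω where
  carrier := {x | x ^ p ∈ K}
  one_mem' := by simpa using K.one_mem
  mul_mem' := by
    intro x y hx hy
    show (x * y) ^ p ∈ K
    rw [mul_pow]
    exact mul_mem hx hy
  zero_mem' := by
    show (0 : Ω) ^ p ∈ K
    rw [zero_pow hp.out.ne_zero]
    exact K.zero_mem
  add_mem' := by
    intro x y hx hy
    show (x + y) ^ p ∈ K
    rw [add_pow_char]
    exact add_mem hx hy
  neg_mem' := by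
    intro x hx
    show (-x) ^ p ∈ K
    rw [neg_pow, neg_one_pow_char Ω p, neg_one_mul]
    exact neg_mem hx
  inv_mem' := by
    intro x hx
    show x⁻¹ ^ p ∈ K
    rw [inv_pow]
    exact inv_mem hx

namespace AddVal

variable {Ω : Type*} [Field Ω] {Γ : Type*} [AddCommGroup Γ] [LinearOrder Γ] [IsOrderedAddMonoid Γ]
variable (w : AddVal Ω Γ)

/-- `(K(ϑ)|K,v)` is an Artin-Schreier defect extension: `ϑᵖ - ϑ ∈ K`, `ϑ ∉ K`, and the
extension has nontrivial defect; the latter is equivalent (for a normal extension of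
prime degree) to: `v` extends uniquely to `K(ϑ)` and the extension is immediate. -/
def ASDefectExt (p : ℕ) (K : Subfield Ω) (ϑ : Ω) : Prop :=
  ϑ ∉ K ∧ ϑ ^ p - ϑ ∈ K ∧ w.uvExt K (adjoinEl K ϑ) ∧ w.immediateExt K (adjoinEl K ϑ)

/-- The Artin-Schreier defect extension `(K(ϑ)|K,v)` is dependent. -/
def dependentAS (p : ℕ) (K : Subfield Ω) (ϑ : Ω) : Prop :=
  ∃ η : Ω, η ∉ K ∧ η ^ p ∈ K ∧ w.immediateExt K (adjoinEl K η) ∧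
    ∀ c ∈ K, w.v (ϑ - c) < w.v (ϑ - η)

/-- `(L|K,v)` is a tame extension (of a henselian field): every finite subextension
`E|K` is defectless, has ramification index prime to the residue characteristic
exponent `p`, and has separable residue field extension `Ev|Kv` (the latter expressed
by the criterion that each residue is a simple root of a polynomial over `Kv`). -/
def tameExt (p : ℕ) (K L : Subfield Ω) : Prop :=
  K ≤ L ∧ ∀ E : Subfield Ω, K ≤ E → E ≤ L → 0 < fdeg K E →
    w.defect K E = 1 ∧ ¬ p ∣ w.ramIdx K E ∧
      ∀ x ∈ E, 0 ≤ w.v x → ∃ g : Polynomial Ω, g.Monic ∧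
        (∀ n, g.coeff n ∈ K ∧ 0 ≤ w.v (g.coeff n)) ∧
        0 < w.v (g.eval x) ∧ w.v (g.derivative.eval x) = 0

end AddVal


section Helpers

namespace AddVal

variable {Ω : Type*} [Field Ω] {Γ : Type*} [AddCommGroup Γ] [LinearOrder Γ] [IsOrderedAddMonoid Γ]
variable (w : AddVal Ω Γ)

lemma v_zero' : w.v 0 = ⊤ := (w.v_top_iff 0).mpr rfl

lemma v_ne_top' {x : Ω} (hx : x ≠ 0) : w.v x ≠ ⊤ := fun h => hx ((w.v_top_iff x).mp h)

lemma v_neg' (x : Ω) : w.v (-x) = w.v x := by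
  have h1 : w.v (-1 : Ω) = 0 := by
    have h := w.v_mul (-1 : Ω) (-1)
    rw [neg_one_mul, neg_neg, w.v_one] at h
    cases hv : w.v (-1 : Ω) with
    | top => rw [hv] at h; simp at h
    | coe γ =>
        rw [hv, ← WithTop.coe_add] at h
        have : γ + γ = 0 := by exact_mod_cast h.symm
        have hγ : γ = 0 := by
          rcases lt_trichotomy γ 0 with h' | h' | h'
          · have h2 : γ + γ < 0 + 0 := add_lt_add h' h'
            rw [add_zero, this] at h2; exact absurd h2 (lt_irrefl 0)
          · exact h'
          · have h2 : (0:Γ) + 0 < γ + γ := add_lt_add h' h'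
            rw [add_zero, this] at h2; exact absurd h2 (lt_irrefl 0)
        rw [hγ]; rfl
  calc w.v (-x) = w.v ((-1) * x) := by rw [neg_one_mul]
  _ = w.v (-1 : Ω) + w.v x := w.v_mul _ _
  _ = w.v x := by rw [h1, zero_add]

lemma v_sub_comm' (x y : Ω) : w.v (x - y) = w.v (y - x) := by
  rw [← neg_sub y x, w.v_neg']

lemma v_add_eq_left' {x y : Ω} (h : w.v x < w.v y) : w.v (x + y) = w.v x := by
  have h1 := w.v_add x y
  rw [min_eq_left h.le] at h1
  refine le_antisymm ?_ h1
  by_contra hlt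
  push_neg at hlt
  have h2 := w.v_add (x + y) (-y)
  rw [add_neg_cancel_right, w.v_neg'] at h2
  exact absurd h2 (not_le_of_gt (lt_min hlt h))

lemma v_pow_coe' {x : Ω} {γ : Γ} (h : w.v x = (γ : WithTop Γ)) (n : ℕ) :
    w.v (x ^ n) = ((n • γ : Γ) : WithTop Γ) := by
  induction n with
  | zero => simpa using w.v_one
  | succ n ih =>
      rw [pow_succ, w.v_mul, ih, h, ← WithTop.coe_add, succ_nsmul]

lemma v_sum_ge' {ι : Type*} (s : Finset ι) (f : ι → Ω) (t : WithTop Γ)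
    (h : ∀ i ∈ s, t ≤ w.v (f i)) : t ≤ w.v (∑ i ∈ s, f i) := by
  classical
  induction s using Finset.induction_on with
  | empty => rw [Finset.sum_empty, w.v_zero']; exact le_top
  | insert _ _ hni ih =>
      rename_i i s
      rw [Finset.sum_insert hni]
      refine le_trans (le_min (h i (Finset.mem_insert_self i s))
        (ih fun j hj => h j (Finset.mem_insert_of_mem hj))) (w.v_add _ _)

lemma v_sum_gt' {ι : Type*} (s : Finset ι) (f : ι → Ω) (t : WithTop Γ) (ht : t ≠ ⊤)
    (h : ∀ i ∈ s, t < w.v (f i)) : t < w.v (∑ i ∈ s, f i) := by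
  classical
  induction s using Finset.induction_on with
  | empty => rw [Finset.sum_empty, w.v_zero']; exact lt_top_iff_ne_top.mpr ht
  | insert _ _ hni ih =>
      rename_i i s
      rw [Finset.sum_insert hni]
      refine lt_of_lt_of_le (lt_min (h i (Finset.mem_insert_self i s))
        (ih fun j hj => h j (Finset.mem_insert_of_mem hj))) (w.v_add _ _)

lemma v_sum_eq' {ι : Type*} (s : Finset ι) (f : ι → Ω) (i₀ : ι) (hi₀ : i₀ ∈ s)
    (h : ∀ i ∈ s, i ≠ i₀ → w.v (f i₀) < w.v (f i)) (h0 : w.v (f i₀) ≠ ⊤) :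
    w.v (∑ i ∈ s, f i) = w.v (f i₀) := by
  classical
  rw [← Finset.add_sum_erase s f hi₀]
  rw [add_comm]  -- f i₀ + rest → rest + f i₀? we want v (f i₀ + rest) = v (f i₀); use v_add_eq_left'
  rw [add_comm]
  rw [w.v_add_eq_left' (w.v_sum_gt' _ f _ h0
    fun j hj => h j (Finset.mem_of_mem_erase hj) (Finset.ne_of_mem_erase hj))]

lemma v_multiset_prod' (m : Multiset Ω) : w.v m.prod = (m.map w.v).sum := by
  induction m using Multiset.induction_on with
  | empty => simpa using w.v_one
  | cons a m ih => rw [Multiset.prod_cons, w.v_mul, ih, Multiset.map_cons, Multiset.sum_cons]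

lemma multiset_sum_ne_top {m : Multiset (WithTop Γ)} (h : ∀ x ∈ m, x ≠ ⊤) : m.sum ≠ ⊤ := by
  induction m using Multiset.induction_on with
  | empty => simp
  | cons a m ih =>
      rw [Multiset.sum_cons]
      exact WithTop.add_ne_top.mpr ⟨h a (Multiset.mem_cons_self a m),
        ih fun x hx => h x (Multiset.mem_cons_of_mem hx)⟩

end AddVal

end Helpers

section PolyAux

set_option maxHeartbeats 1000000
set_option synthInstance.maxHeartbeats 400000

open Polynomial

variable {Ω : Type*} [Field Ω]

lemma eval_mem_of_coeff_mem (K : Subfield Ω) {p : Polynomial Ω} (hp : ∀ i, p.coeff i ∈ K)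
    {c : Ω} (hc : c ∈ K) : p.eval c ∈ K := by
  rw [Polynomial.eval_eq_sum_range]
  exact Subfield.sum_mem _ fun i _ => mul_mem (hp i) (pow_mem hc i)

lemma exists_lift_poly (K : Subfield Ω) (p : Polynomial Ω) (hp : ∀ i, p.coeff i ∈ K) :
    ∃ P : Polynomial ↥K, P.map (algebraMap ↥K Ω) = p := by
  refine ⟨∑ i ∈ Finset.range (p.natDegree + 1),
    Polynomial.C (⟨p.coeff i, hp i⟩ : ↥K) * Polynomial.X ^ i, ?_⟩
  rw [Polynomial.map_sum]
  conv_rhs => rw [p.as_sum_range]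
  refine Finset.sum_congr rfl fun i _ => ?_
  rw [Polynomial.map_mul, Polynomial.map_C, Polynomial.map_pow, Polynomial.map_X,
    Polynomial.C_mul_X_pow_eq_monomial]
  rfl

lemma isIntegral_and_minpoly_le (K : Subfield Ω) {e : Ω} {p : Polynomial Ω}
    (hpK : ∀ i, p.coeff i ∈ K) (hp0 : p ≠ 0) (hroot : p.eval e = 0) :
    IsIntegral ↥K e ∧ (minpoly ↥K e).natDegree ≤ p.natDegree := by
  obtain ⟨P, hPmap⟩ := exists_lift_poly K p hpK
  have hP0 : P ≠ 0 := by
    intro h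
    rw [h, Polynomial.map_zero] at hPmap
    exact hp0 hPmap.symm
  have haev : (Polynomial.aeval e) P = 0 := by
    rw [Polynomial.aeval_def, ← Polynomial.eval_map, hPmap, hroot]
  have hint : IsIntegral ↥K e := IsAlgebraic.isIntegral ⟨P, hP0, haev⟩
  refine ⟨hint, ?_⟩
  have hdvd := minpoly.dvd ↥K e haev
  have h2 := Polynomial.natDegree_le_of_dvd hdvd hP0
  have h3 : P.natDegree = p.natDegree := by
    rw [← hPmap, Polynomial.natDegree_map_eq_of_injective (algebraMap ↥K Ω).injective]
  rwa [h3] at h2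

lemma rep_adjoinEl (K : Subfield Ω) {b : Ω} (hb : IsIntegral ↥K b) :
    ∀ x ∈ AddVal.adjoinEl K b, ∃ r : Polynomial Ω, (∀ i, r.coeff i ∈ K) ∧
      r.natDegree < (minpoly ↥K b).natDegree ∧ r.eval b = x := by
  intro x hx
  have hsub : AddVal.adjoinEl K b ≤ (IntermediateField.adjoin ↥K {b}).toSubfield := by
    rw [AddVal.adjoinEl, Subfield.closure_le]
    rw [Set.insert_subset_iff]
    constructor
    · exact IntermediateField.mem_adjoin_simple_self ↥K b
    · intro y hy
      have := (IntermediateField.adjoin ↥K {b}).algebraMap_mem ⟨y, hy⟩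
      exact this
  have hx2 : x ∈ (IntermediateField.adjoin ↥K {b}).toSubalgebra := hsub hx
  rw [IntermediateField.adjoin_simple_toSubalgebra_of_isAlgebraic hb.isAlgebraic,
    Algebra.adjoin_singleton_eq_range_aeval] at hx2
  obtain ⟨P, hP⟩ := hx2
  set q := P %ₘ minpoly ↥K b with hq
  have hmonic := minpoly.monic hb
  have hdpos := minpoly.natDegree_pos hb
  have hne1 : minpoly ↥K b ≠ 1 := by
    intro h
    rw [h, Polynomial.natDegree_one] at hdpos
    exact lt_irrefl 0 hdpos
  have hqdeg : q.natDegree < (minpoly ↥K b).natDegree :=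
    Polynomial.natDegree_modByMonic_lt P hmonic hne1
  have hqeval : (Polynomial.aeval b) q = x := by
    rw [hq, Polynomial.modByMonic_eq_sub_mul_div P (minpoly ↥K b), map_sub, map_mul,
      minpoly.aeval, zero_mul, sub_zero]
    exact hP
  refine ⟨q.map (algebraMap ↥K Ω), ?_, ?_, ?_⟩
  · intro i
    rw [Polynomial.coeff_map]
    exact (q.coeff i).2
  · calc (q.map (algebraMap ↥K Ω)).natDegree ≤ q.natDegree := Polynomial.natDegree_map_le
    _ < _ := hqdeg
  · rw [Polynomial.eval_map, ← Polynomial.aeval_def, hqeval]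

lemma fdeg_adjoinEl_le (K : Subfield Ω) {b : Ω} (hb : IsIntegral ↥K b) :
    AddVal.fdeg K (AddVal.adjoinEl K b) ≤ (minpoly ↥K b).natDegree := by
  have hle : K ≤ AddVal.adjoinEl K b := fun x hx =>
    Subfield.subset_closure (Set.mem_insert_of_mem _ hx)
  have hbmem : b ∈ AddVal.adjoinEl K b := Subfield.subset_closure (Set.mem_insert _ _)
  rw [AddVal.fdeg, dif_pos hle]
  letI : Algebra ↥K ↥(AddVal.adjoinEl K b) := (Subfield.inclusion hle).toAlgebra
  set d := (minpoly ↥K b).natDegree with hd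
  have hspan : Submodule.span ↥K (Set.range fun i : Fin d =>
      ((⟨b, hbmem⟩ : ↥(AddVal.adjoinEl K b)) ^ (i : ℕ))) = ⊤ := by
    rw [Submodule.eq_top_iff']
    intro x
    obtain ⟨r, hrK, hrdeg, hreval⟩ := rep_adjoinEl K hb ↑x x.2
    have hxeq : x = ∑ i : Fin d, (⟨r.coeff (i : ℕ), hrK _⟩ : ↥K) •
        ((⟨b, hbmem⟩ : ↥(AddVal.adjoinEl K b)) ^ (i : ℕ)) := by
      apply Subtype.ext
      have hcoe : ((∑ i : Fin d, (⟨r.coeff (i : ℕ), hrK _⟩ : ↥K) •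
          ((⟨b, hbmem⟩ : ↥(AddVal.adjoinEl K b)) ^ (i : ℕ)) : ↥(AddVal.adjoinEl K b)) : Ω)
          = ∑ i : Fin d, r.coeff (i : ℕ) * b ^ (i : ℕ) := by
        rw [AddSubmonoidClass.coe_finset_sum]
        refine Finset.sum_congr rfl fun i _ => ?_
        rfl
      rw [hcoe, Fin.sum_univ_eq_sum_range (fun i => r.coeff i * b ^ i) d,
        ← Polynomial.eval_eq_sum_range' hrdeg, hreval]
    rw [hxeq]
    exact Submodule.sum_mem _ fun i _ => Submodule.smul_mem _ _
      (Submodule.subset_span ⟨i, rfl⟩)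
  have := _root_.finrank_le_of_span_eq_top hspan
  simpa using this

end PolyAux

set_option maxHeartbeats 4000000
set_option synthInstance.maxHeartbeats 400000

/-- Lemma `wisi`. Over a henselian field `(K,v)`, if `a` in the
algebraic closure of `K` is weakly immediate but not strongly immediate over `K`, then
there is `b` with `(K(b)|K,v)` immediate, `dist(b,K) = dist(a,K)` and
`[K(b):K] < [K(a):K]`. -/
theorem statement_5 (Ω : Type*) [Field Ω] [IsAlgClosed Ω]
    (Γ : Type*) [AddCommGroup Γ] [LinearOrder Γ] [IsOrderedAddMonoid Γ] (w : AddVal Ω Γ)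
    (K : Subfield Ω) [Algebra.IsAlgebraic ↥K Ω]
    (hsur : ∀ γ : Γ, ∃ x : Ω, w.v x = (γ : WithTop Γ))
    (hhens : w.henselian K)
    (a : Ω) (hwi : w.weaklyImmediate K a) (hnsi : ¬ w.stronglyImmediate K a) :
    ∃ b : Ω, w.immediateExt K (AddVal.adjoinEl K b) ∧
      w.distSet K b = w.distSet K a ∧
      AddVal.fdeg K (AddVal.adjoinEl K b) < AddVal.fdeg K (AddVal.adjoinEl K a) := by
  classical
  have hK : a ∉ K := by
    intro h
    obtain ⟨c', _, hc'⟩ := hwi a h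
    rw [sub_self, w.v_zero'] at hc'
    exact not_top_lt hc'
  have hane : ∀ c ∈ K, a - c ≠ 0 := by
    intro c hc h
    exact hK (by rwa [sub_eq_zero.mp h])
  set n := AddVal.fdeg K (AddVal.adjoinEl K a) with hn
  rw [AddVal.stronglyImmediate, not_and] at hnsi
  have h1 := hnsi hwi
  push_neg at h1
  obtain ⟨g, hgK, hgdeg, hgfail⟩ := h1
  have hg0 : g ≠ 0 := by
    intro h
    obtain ⟨c, hc, c', hc', h1', h2', hne⟩ := hgfail 0 K.zero_mem
    rw [h] at hne
    simp at hne
  -- max over a multiset of "next" elements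
  have exists_above : ∀ s : Multiset Ω, (∀ d ∈ s, ∃ c ∈ K, w.v (a - d) < w.v (a - c)) →
      ∃ c₀ ∈ K, ∀ d ∈ s, w.v (a - d) < w.v (a - c₀) := by
    intro s
    induction s using Multiset.induction_on with
    | empty => exact fun _ => ⟨0, K.zero_mem, by simp⟩
    | cons d s ih =>
        intro h
        obtain ⟨c₁, hc₁, hc₁'⟩ := ih fun d' hd' => h d' (Multiset.mem_cons_of_mem hd')
        obtain ⟨c₂, hc₂, hc₂'⟩ := h d (Multiset.mem_cons_self d s)
        rcases le_total (w.v (a - c₁)) (w.v (a - c₂)) with hle | hle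
        · refine ⟨c₂, hc₂, fun d' hd' => ?_⟩
          rcases Multiset.mem_cons.mp hd' with rfl | hd'
          · exact hc₂'
          · exact lt_of_lt_of_le (hc₁' d' hd') hle
        · refine ⟨c₁, hc₁, fun d' hd' => ?_⟩
          rcases Multiset.mem_cons.mp hd' with rfl | hd'
          · exact lt_of_lt_of_le hc₂' hle
          · exact hc₁' d' hd'
  -- value of an evaluation beyond all roots
  have v_eval_eq : ∀ (p : Polynomial Ω), p ≠ 0 → ∀ e : Ω,
      (∀ d ∈ p.roots, w.v (a - d) < w.v (a - e)) →
      w.v (p.eval e) = w.v p.leadingCoeff + (p.roots.map (fun d => w.v (a - d))).sum := by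
    intro p hp0 e he
    have hsplit : p = Polynomial.C p.leadingCoeff *
        (p.roots.map (fun d => Polynomial.X - Polynomial.C d)).prod :=
      (IsAlgClosed.splits p).eq_prod_roots
    conv_lhs => rw [hsplit]
    rw [Polynomial.eval_mul, Polynomial.eval_C, w.v_mul, Polynomial.eval_multiset_prod,
      Multiset.map_map, w.v_multiset_prod', Multiset.map_map]
    congr 1
    refine congrArg _ (Multiset.map_congr rfl fun d hd => ?_)
    show w.v (Polynomial.eval e (Polynomial.X - Polynomial.C d)) = w.v (a - d)
    rw [Polynomial.eval_sub, Polynomial.eval_X, Polynomial.eval_C]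
    have heq : e - d = (a - d) + (-(a - e)) := by ring
    rw [heq, w.v_add_eq_left' (by rw [w.v_neg']; exact he d hd)]
  have const_of_noUB : ∀ p : Polynomial Ω, p ≠ 0 →
      (∀ d ∈ p.roots, ∃ c ∈ K, w.v (a - d) < w.v (a - c)) →
      ∃ c₀ ∈ K, ∀ e : Ω, w.v (a - c₀) ≤ w.v (a - e) →
        w.v (p.eval e) = w.v p.leadingCoeff + (p.roots.map fun d => w.v (a - d)).sum := by
    intro p hp0 h
    obtain ⟨c₀, hc₀K, hc₀⟩ := exists_above p.roots h
    exact ⟨c₀, hc₀K, fun e he => v_eval_eq p hp0 e fun d hd => lt_of_lt_of_le (hc₀ d hd) he⟩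
  -- some root of g bounds v(a-K) from above
  have hUBg : ∃ d ∈ g.roots, ∀ c ∈ K, w.v (a - c) ≤ w.v (a - d) := by
    by_contra hno
    push_neg at hno
    have hno' : ∀ d ∈ g.roots, ∃ c ∈ K, w.v (a - d) < w.v (a - c) := by
      intro d hd
      obtain ⟨c, hc, hlt⟩ := hno d hd
      exact ⟨c, hc, hlt⟩
    obtain ⟨c₀, hc₀K, hc₀⟩ := const_of_noUB g hg0 hno'
    obtain ⟨c, hcK, c', hc'K, hle1, hle2, hne⟩ := hgfail c₀ hc₀K
    rw [hc₀ c hle1, hc₀ c' hle2] at hne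
    exact hne rfl
  set W : Set ℕ := {d | ∃ p : Polynomial Ω, (∀ i, p.coeff i ∈ K) ∧ p ≠ 0 ∧ p.natDegree = d ∧
      ∃ e ∈ p.roots, ∀ c ∈ K, w.v (a - c) ≤ w.v (a - e)} with hWdef
  have hWg : g.natDegree ∈ W := ⟨g, hgK, hg0, rfl, hUBg⟩
  set m := sInf W with hmdef
  obtain ⟨f, hfK, hf0, hfdeg, b, hbroot, hbUB⟩ := Nat.sInf_mem (⟨_, hWg⟩ : W.Nonempty)
  have hm_le : m ≤ g.natDegree := Nat.sInf_le hWg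
  have hmn : m < n := lt_of_le_of_lt hm_le hgdeg
  have hmin : ∀ p : Polynomial Ω, (∀ i, p.coeff i ∈ K) → p ≠ 0 → p.natDegree < m →
      ∀ d ∈ p.roots, ∃ c ∈ K, w.v (a - d) < w.v (a - c) := by
    intro p hpK hp0 hpdeg d hd
    by_contra h
    push_neg at h
    have hmem : p.natDegree ∈ W := ⟨p, hpK, hp0, rfl, d, hd, h⟩
    exact absurd (Nat.sInf_le hmem) (not_le.mpr hpdeg)
  have hstrict : ∀ c ∈ K, w.v (a - c) < w.v (a - b) := by
    intro c hc
    rcases lt_or_eq_of_le (hbUB c hc) with h | h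
    · exact h
    · obtain ⟨c', hc', hlt⟩ := hwi c hc
      exact absurd (lt_of_lt_of_le hlt ((hbUB c' hc').trans_eq h.symm)) (lt_irrefl _)
  have hvb : ∀ c ∈ K, w.v (b - c) = w.v (a - c) := by
    intro c hc
    have heq : b - c = (a - c) + (-(a - b)) := by ring
    rw [heq, w.v_add_eq_left' (by rw [w.v_neg']; exact hstrict c hc)]
  have hfb0 : f.eval b = 0 := (Polynomial.mem_roots'.mp hbroot).2
  obtain ⟨hbint, hminle⟩ := isIntegral_and_minpoly_le K hfK hf0 hfb0
  set d' := (minpoly ↥K b).natDegree with hd'def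
  have hd'm : d' ≤ m := by rw [hmdef, ← hfdeg]; exact hminle
  have hfdegb : AddVal.fdeg K (AddVal.adjoinEl K b) ≤ d' := fdeg_adjoinEl_le K hbint
  have ha_ne_root : ∀ p : Polynomial Ω, (∀ i, p.coeff i ∈ K) → p ≠ 0 → p.natDegree < n →
      p.eval a ≠ 0 := by
    intro p hpK hp0 hpdeg heval
    obtain ⟨haint, hle⟩ := isIntegral_and_minpoly_le K hpK hp0 heval
    have h1 : AddVal.fdeg K (AddVal.adjoinEl K a) ≤ (minpoly ↥K a).natDegree :=
      fdeg_adjoinEl_le K haint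
    rw [← hn] at h1
    omega
  have lemB : ∀ r : Polynomial Ω, (∀ i, r.coeff i ∈ K) → r ≠ 0 → r.natDegree < m →
      ∃ c₀ ∈ K, (∀ e : Ω, w.v (a - c₀) ≤ w.v (a - e) → w.v (r.eval e) = w.v (r.eval b)) ∧
        w.v (r.eval b) ≠ ⊤ := by
    intro r hrK hr0 hrdeg
    obtain ⟨c₀, hc₀K, hc₀⟩ := const_of_noUB r hr0 (hmin r hrK hr0 hrdeg)
    have hb_eval : w.v (r.eval b) = w.v r.leadingCoeff +
        (r.roots.map fun d => w.v (a - d)).sum := hc₀ b (hbUB c₀ hc₀K)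
    refine ⟨c₀, hc₀K, fun e he => by rw [hc₀ e he, hb_eval], ?_⟩
    rw [hb_eval]
    refine WithTop.add_ne_top.mpr ⟨w.v_ne_top' (Polynomial.leadingCoeff_ne_zero.mpr hr0), ?_⟩
    apply AddVal.multiset_sum_ne_top
    intro t ht
    obtain ⟨d, hd, rfl⟩ := Multiset.mem_map.mp ht
    apply w.v_ne_top'
    intro hsub
    have had : a = d := by rwa [sub_eq_zero] at hsub
    have heval : r.eval a = 0 := by
      rw [had]; exact (Polynomial.mem_roots'.mp hd).2
    exact ha_ne_root r hrK hr0 (lt_trans hrdeg hmn) heval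
  have avoid : ∀ (nn : ℕ) (T : Finset (WithTop Γ)), T.card ≤ nn → ∀ c₁ ∈ K,
      ∃ c ∈ K, w.v (a - c₁) ≤ w.v (a - c) ∧ ∀ t ∈ T, w.v (a - c) ≠ t := by
    intro nn
    induction nn with
    | zero =>
        intro T hT c₁ hc₁
        have hTe : T = ∅ := Finset.card_eq_zero.mp (Nat.le_zero.mp hT)
        exact ⟨c₁, hc₁, le_refl _, by simp [hTe]⟩
    | succ nn ih =>
        intro T hT c₁ hc₁
        by_cases hc : ∀ t ∈ T, w.v (a - c₁) ≠ t
        · exact ⟨c₁, hc₁, le_refl _, hc⟩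
        · push_neg at hc
          obtain ⟨t₀, ht₀T, ht₀⟩ := hc
          obtain ⟨c', hc'K, hlt⟩ := hwi c₁ hc₁
          obtain ⟨c, hcK, hle, havoid⟩ := ih (T.erase t₀)
            (by have := Finset.card_erase_of_mem ht₀T; omega) c' hc'K
          refine ⟨c, hcK, le_trans hlt.le hle, fun t ht => ?_⟩
          by_cases htt : t = t₀
          · subst htt
            intro heq
            rw [← ht₀] at heq
            exact absurd (heq ▸ lt_of_lt_of_le hlt hle) (lt_irrefl _)
          · exact havoid t (Finset.mem_erase.mpr ⟨htt, ht⟩)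
  have nsmul_lt : ∀ (k : ℕ), 0 < k → ∀ {γ δ : Γ}, γ < δ → k • γ < k • δ := by
    intro k hk γ δ h
    have h2 := zsmul_lt_zsmul_right (show (0:ℤ) < (k:ℤ) by exact_mod_cast hk) h
    rwa [natCast_zsmul, natCast_zsmul] at h2
  have hKle : K ≤ AddVal.adjoinEl K b := fun x hx =>
    Subfield.subset_closure (Set.mem_insert_of_mem _ hx)
  -- value group equality
  have hvg : w.valueGroup K = w.valueGroup (AddVal.adjoinEl K b) := by
    apply le_antisymm
    · rintro γ ⟨x, hx, hv⟩
      exact ⟨x, hKle hx, hv⟩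
    · rintro γ ⟨x, hxL, hv⟩
      have hx0 : x ≠ 0 := by
        intro h
        rw [h, w.v_zero'] at hv
        exact WithTop.top_ne_coe hv
      obtain ⟨r, hrK, hrdeg, hreval⟩ := rep_adjoinEl K hbint x hxL
      have hr0 : r ≠ 0 := by
        intro h
        rw [h, Polynomial.eval_zero] at hreval
        exact hx0 hreval.symm
      obtain ⟨c₀, hc₀K, hc₀, _⟩ := lemB r hrK hr0 (lt_of_lt_of_le hrdeg hd'm)
      refine ⟨r.eval c₀, eval_mem_of_coeff_mem K hrK hc₀K, ?_⟩
      rw [hc₀ c₀ (le_refl _), hreval, hv]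
  -- residue field surjectivity
  have hres : ∀ x ∈ AddVal.adjoinEl K b, w.v x = 0 → ∃ c ∈ K, 0 < w.v (x - c) := by
    intro x hxL hvx
    have hx0 : x ≠ 0 := by
      intro h
      rw [h, w.v_zero'] at hvx
      simp at hvx
    obtain ⟨r, hrK, hrdeg, hreval⟩ := rep_adjoinEl K hbint x hxL
    have hr0 : r ≠ 0 := by
      intro h
      rw [h, Polynomial.eval_zero] at hreval
      exact hx0 hreval.symm
    by_cases hN0 : r.natDegree = 0
    · obtain ⟨cst, hcst⟩ := Polynomial.natDegree_eq_zero.mp hN0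
      have hxK : x ∈ K := by
        have h2 := hrK 0
        rw [← hcst, Polynomial.coeff_C_zero] at h2
        rw [← hreval, ← hcst, Polynomial.eval_C]
        exact h2
      refine ⟨x, hxK, ?_⟩
      rw [sub_self, w.v_zero']
      exact WithTop.coe_lt_top 0
    set N := r.natDegree with hNdef
    have hN1 : 1 ≤ N := Nat.pos_of_ne_zero hN0
    set gd : ℕ → Polynomial Ω := fun j => Polynomial.hasseDeriv j r with hgd
    have hgdK : ∀ j i, (gd j).coeff i ∈ K := by
      intro j i
      rw [hgd]
      simp only [Polynomial.hasseDeriv_coeff]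
      exact mul_mem (natCast_mem K _) (hrK _)
    have hgddeg : ∀ j, (gd j).natDegree < m := fun j =>
      lt_of_le_of_lt (le_trans (Polynomial.natDegree_hasseDeriv_le r j) (Nat.sub_le _ _))
        (lt_of_lt_of_le hrdeg hd'm)
    have hgd0 : gd 0 = r := by
      show Polynomial.hasseDeriv 0 r = r
      exact Polynomial.hasseDeriv_zero' r
    have hgdN : gd N ≠ 0 := by
      intro h
      have h2 : (gd N).coeff 0 = 0 := by rw [h]; simp
      rw [hgd] at h2
      simp only [Polynomial.hasseDeriv_coeff, zero_add, Nat.choose_self, Nat.cast_one,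
        one_mul] at h2
      exact (Polynomial.leadingCoeff_ne_zero.mpr hr0) h2
    have hch : ∀ j, ∃ cj, cj ∈ K ∧ (gd j ≠ 0 →
        (∀ e : Ω, w.v (a - cj) ≤ w.v (a - e) → w.v ((gd j).eval e) = w.v ((gd j).eval b)) ∧
        w.v ((gd j).eval b) ≠ ⊤) := by
      intro j
      by_cases h : gd j = 0
      · exact ⟨0, K.zero_mem, fun h' => absurd h h'⟩
      · obtain ⟨cj, hcjK, h1, h2⟩ := lemB (gd j) (hgdK j) h (hgddeg j)
        exact ⟨cj, hcjK, fun _ => ⟨h1, h2⟩⟩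
    choose cf hcfK hcf using hch
    have hβ : ∀ j, ∃ β : Γ, gd j ≠ 0 → w.v ((gd j).eval b) = (β : WithTop Γ) := by
      intro j
      by_cases h : gd j = 0
      · exact ⟨0, fun h' => absurd h h'⟩
      · obtain ⟨β, hb2⟩ := WithTop.ne_top_iff_exists.mp (hcf j h).2
        exact ⟨β, fun _ => hb2.symm⟩
    choose βf hβf using hβ
    obtain ⟨cstar, hcstarK, hcstar⟩ := exists_above ((Finset.range (N+1)).val.map cf)
      (by
        intro d hd
        obtain ⟨j, hj, rfl⟩ := Multiset.mem_map.mp hd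
        exact hwi (cf j) (hcfK j))
    have hcstar' : ∀ j, j ≤ N → w.v (a - cf j) < w.v (a - cstar) := by
      intro j hj
      exact hcstar _ (Multiset.mem_map_of_mem cf (by
        rw [← Finset.mem_def]
        exact Finset.mem_range.mpr (by omega)))
    set Q : ℕ × ℕ → Γ → Prop := fun jk γ => βf jk.1 + jk.1 • γ = βf jk.2 + jk.2 • γ with hQdef
    have hQunique : ∀ j k (γ γ' : Γ), j ≠ k → Q (j,k) γ → Q (j,k) γ' → γ = γ' := by
      intro j k γ γ' hjk h1 h2
      simp only [hQdef] at h1 h2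
      have u1 : j • γ - k • γ = βf k - βf j := by
        rw [sub_eq_sub_iff_add_eq_add, add_comm (j • γ) (βf j)]
        exact h1
      have u2 : j • γ' - k • γ' = βf k - βf j := by
        rw [sub_eq_sub_iff_add_eq_add, add_comm (j • γ') (βf j)]
        exact h2
      have e4 : ((j:ℤ) - (k:ℤ)) • γ = ((j:ℤ) - (k:ℤ)) • γ' := by
        rw [sub_smul, sub_smul, natCast_zsmul, natCast_zsmul, natCast_zsmul, natCast_zsmul,
          u1, u2]
      exact zsmul_right_injective (sub_ne_zero.mpr (by exact_mod_cast hjk)) e4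
    set Tf : Finset (WithTop Γ) := (Finset.range (N+1) ×ˢ Finset.range (N+1)).image
      (fun jk => if h : ∃ γ : Γ, Q jk γ then ((h.choose : Γ) : WithTop Γ) else ⊤) with hTfdef
    have hTf_mem : ∀ j k (γ : Γ), j < N+1 → k < N+1 → j ≠ k →
        Q (j,k) γ → (γ : WithTop Γ) ∈ Tf := by
      intro j k γ hj hk hjk hq
      rw [hTfdef]
      apply Finset.mem_image.mpr
      refine ⟨(j,k), Finset.mem_product.mpr
        ⟨Finset.mem_range.mpr hj, Finset.mem_range.mpr hk⟩, ?_⟩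
      rw [dif_pos ⟨γ, hq⟩]
      have hcs := hQunique j k _ γ hjk (Exists.choose_spec (⟨γ, hq⟩ : ∃ δ : Γ, Q (j,k) δ)) hq
      rw [hcs]
    obtain ⟨c, hcK, hcge, hcavoid⟩ := avoid Tf.card Tf (le_refl _) cstar hcstarK
    obtain ⟨c', hc'K, hcc'⟩ := hwi c hcK
    obtain ⟨γ, hγ⟩ : ∃ γ : Γ, w.v (a - c) = (γ : WithTop Γ) := by
      obtain ⟨γ, hγ⟩ := WithTop.ne_top_iff_exists.mp (w.v_ne_top' (hane c hcK))
      exact ⟨γ, hγ.symm⟩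
    obtain ⟨γ', hγ'⟩ : ∃ γ' : Γ, w.v (a - c') = (γ' : WithTop Γ) := by
      obtain ⟨γ', hγ'⟩ := WithTop.ne_top_iff_exists.mp (w.v_ne_top' (hane c' hc'K))
      exact ⟨γ', hγ'.symm⟩
    have hγγ' : γ < γ' := by
      rw [hγ, hγ'] at hcc'
      exact_mod_cast hcc'
    have hthr : ∀ j, j ≤ N → w.v (a - cf j) ≤ w.v (a - c) :=
      fun j hj => (hcstar' j hj).le.trans hcge
    have hthr' : ∀ j, j ≤ N → w.v (a - cf j) ≤ w.v (a - c') :=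
      fun j hj => (hthr j hj).trans hcc'.le
    have htaylor : ∀ y : Ω, x - r.eval y =
        ∑ i ∈ Finset.range N, (gd (i+1)).eval y * (b - y)^(i+1) := by
      intro y
      have h1 : r.eval b = ∑ i ∈ Finset.range (N+1), (gd i).eval y * (b - y)^i := by
        conv_lhs => rw [show b = (b - y) + y by ring, ← Polynomial.taylor_eval]
        rw [Polynomial.eval_eq_sum_range, Polynomial.natDegree_taylor]
        exact Finset.sum_congr rfl fun i _ => by rw [Polynomial.taylor_coeff]
      rw [← hreval, h1, Finset.sum_range_succ']
      simp only [pow_zero, mul_one, hgd0]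
      rw [add_sub_cancel_right]
    have hval : ∀ (y : Ω) (δ : Γ), y ∈ K → w.v (a - y) = (δ : WithTop Γ) →
        (∀ j, j ≤ N → w.v (a - cf j) ≤ w.v (a - y)) →
        ∀ i ∈ Finset.range N, w.v ((gd (i+1)).eval y * (b - y)^(i+1)) =
          if gd (i+1) = 0 then ⊤ else ((βf (i+1) + (i+1) • δ : Γ) : WithTop Γ) := by
      intro y δ hyK hyδ hythr i hi
      have hby : w.v (b - y) = (δ : WithTop Γ) := by rw [hvb y hyK, hyδ]
      by_cases h : gd (i+1) = 0
      · rw [if_pos h, h, Polynomial.eval_zero, zero_mul, w.v_zero']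
      · have hiN : i + 1 ≤ N := by
          have := Finset.mem_range.mp hi
          omega
        rw [if_neg h, w.v_mul, w.v_pow_coe' hby,
          (hcf (i+1) h).1 y (hythr (i+1) hiN), hβf (i+1) h, ← WithTop.coe_add]
    have hvalc := hval c γ hcK hγ (fun j hj => hthr j hj)
    have hvalc' := hval c' γ' hc'K hγ' (fun j hj => hthr' j hj)
    obtain ⟨i₀, hi₀mem, hi₀min⟩ := Finset.exists_min_image (Finset.range N)
      (fun i => w.v ((gd (i+1)).eval c * (b - c)^(i+1)))
      ⟨0, Finset.mem_range.mpr (by omega)⟩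
    have hNmem : N - 1 ∈ Finset.range N := Finset.mem_range.mpr (by omega)
    have hNsucc : N - 1 + 1 = N := by omega
    have hsome : w.v ((gd (N-1+1)).eval c * (b - c)^(N-1+1)) ≠ ⊤ := by
      rw [hvalc (N-1) hNmem, if_neg (by rw [hNsucc]; exact hgdN)]
      exact WithTop.coe_ne_top
    have hi₀top : w.v ((gd (i₀+1)).eval c * (b - c)^(i₀+1)) ≠ ⊤ := by
      intro h
      apply hsome
      have h2 := hi₀min (N-1) hNmem
      rw [h] at h2
      exact top_le_iff.mp h2
    have hi₀ne : gd (i₀+1) ≠ 0 := by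
      intro h
      apply hi₀top
      rw [hvalc i₀ hi₀mem, if_pos h]
    have hvFi₀ : w.v ((gd (i₀+1)).eval c * (b - c)^(i₀+1)) =
        ((βf (i₀+1) + (i₀+1) • γ : Γ) : WithTop Γ) := by
      rw [hvalc i₀ hi₀mem, if_neg hi₀ne]
    have huniq : ∀ i ∈ Finset.range N, i ≠ i₀ →
        w.v ((gd (i₀+1)).eval c * (b - c)^(i₀+1)) <
        w.v ((gd (i+1)).eval c * (b - c)^(i+1)) := by
      intro i hi hne
      rcases lt_or_eq_of_le (hi₀min i hi) with h | h
      · exact h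
      · exfalso
        by_cases hz : gd (i+1) = 0
        · rw [hvalc i hi, if_pos hz] at h
          exact hi₀top h
        · rw [hvFi₀] at h
          rw [hvalc i hi, if_neg hz] at h
          have heq : βf (i₀+1) + (i₀+1) • γ = βf (i+1) + (i+1) • γ := by exact_mod_cast h
          have hQt : Q (i₀+1, i+1) γ := heq
          have hTm := hTf_mem (i₀+1) (i+1) γ
            (by have := Finset.mem_range.mp hi₀mem; omega)
            (by have := Finset.mem_range.mp hi; omega)
            (by omega) hQt
          exact hcavoid _ hTm hγ
    have hvxc : w.v (x - r.eval c) = ((βf (i₀+1) + (i₀+1) • γ : Γ) : WithTop Γ) := by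
      rw [htaylor c, w.v_sum_eq' _ _ i₀ hi₀mem huniq hi₀top, hvFi₀]
    have hvrc : w.v (r.eval c) = 0 := by
      have hr0' : gd 0 ≠ 0 := by rw [hgd0]; exact hr0
      have h1 := (hcf 0 hr0').1 c (hthr 0 (by omega))
      rw [hgd0] at h1
      rw [h1, hreval, hvx]
    have hge0 : (0 : WithTop Γ) ≤ w.v (x - r.eval c) := by
      have h2 := w.v_add x (- r.eval c)
      rw [w.v_neg', hvx, hvrc, ← sub_eq_add_neg] at h2
      simpa using h2
    have hterm' : ∀ i ∈ Finset.range N,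
        w.v (x - r.eval c) < w.v ((gd (i+1)).eval c' * (b - c')^(i+1)) := by
      intro i hi
      rw [hvalc' i hi, hvxc]
      by_cases hz : gd (i+1) = 0
      · rw [if_pos hz]
        exact WithTop.coe_lt_top _
      · rw [if_neg hz]
        have h1 : w.v ((gd (i+1)).eval c * (b - c)^(i+1)) =
            ((βf (i+1) + (i+1) • γ : Γ) : WithTop Γ) := by
          rw [hvalc i hi, if_neg hz]
        have h2 : βf (i+1) + (i+1) • γ < βf (i+1) + (i+1) • γ' :=
          add_lt_add_right (nsmul_lt (i+1) (by omega) hγγ') _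
        have h3 : w.v ((gd (i₀+1)).eval c * (b - c)^(i₀+1)) ≤
            ((βf (i+1) + (i+1) • γ : Γ) : WithTop Γ) := by
          rw [← h1]; exact hi₀min i hi
        rw [hvFi₀] at h3
        calc ((βf (i₀+1) + (i₀+1) • γ : Γ) : WithTop Γ) ≤ _ := h3
        _ < _ := by exact_mod_cast h2
    have hfinal : w.v (x - r.eval c) < w.v (x - r.eval c') := by
      conv_rhs => rw [htaylor c']
      refine w.v_sum_gt' _ _ _ ?_ hterm'
      rw [hvxc]
      exact WithTop.coe_ne_top
    exact ⟨r.eval c', eval_mem_of_coeff_mem K hrK hc'K,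
      lt_of_le_of_lt hge0 hfinal⟩
  refine ⟨b, ⟨hKle, hvg, hres⟩, ?_, lt_of_le_of_lt (hfdegb.trans hd'm) hmn⟩
  ext γ
  constructor
  · rintro ⟨h1, c, hc, δ, hδ, hvδ, hγδ⟩
    exact ⟨h1, c, hc, δ, hδ, by rw [← hvb c hc]; exact hvδ, hγδ⟩
  · rintro ⟨h1, c, hc, δ, hδ, hvδ, hγδ⟩
    exact ⟨h1, c, hc, δ, hδ, by rw [hvb c hc]; exact hvδ, hγδ⟩
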